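/- If f is a parking function of length n and g is a parking function of length m, then the concatenation f × g : {1,...,n+m} → {1,...,n+m}, defined by (f × g)(i) = f(i) for i ≤ n and (f × g)(i) = g(i-n) + n for i > n, is a parking function of length n+m. Moreover, for any (n,m)-shuffle γ, the function (f × g) ∘ γ is also a parking function. -/
import Mathlib


/-- `σ` is an `L`-shuffle for a composition `L = (n₁,…,n_r)`. -/
def IsCompShuffle (n : ℕ) (L : List ℕ) (σ : Equiv.Perm (Fin n)) : Prop :=
  ∀ (k : ℕ) (i j : Fin n), (L.take k).sum ≤ (i : ℕ) → (j : ℕ) < (L.take (k + 1)).sum →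
    (i : ℕ) < (j : ℕ) → σ⁻¹ i < σ⁻¹ j

/-- `f` is a parking function: its nondecreasing rearrangement `g` satisfies `g(i) ≤ i`. -/
def IsParking {n : ℕ} (f : Fin n → Fin n) : Prop :=
  ∃ (g : Fin n → Fin n) (σ : Equiv.Perm (Fin n)),
    Monotone g ∧ (∀ i : Fin n, (g i : ℕ) ≤ (i : ℕ)) ∧ f = g ∘ σ

/-- Concatenation `f × g` of `f : {1,…,n} → {1,…,n}` and `g : {1,…,m} → {1,…,m}`. -/
def concatF {n m : ℕ} (f : Fin n → Fin n) (g : Fin m → Fin m) :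
    Fin (n + m) → Fin (n + m) := fun i =>
  if h : (i : ℕ) < n then
    ⟨(f ⟨i, h⟩ : ℕ), Nat.lt_of_lt_of_le (f ⟨i, h⟩).isLt (Nat.le_add_right n m)⟩
  else
    ⟨n + (g ⟨(i : ℕ) - n, by have := i.isLt; omega⟩ : ℕ),
      Nat.add_lt_add_left (g ⟨(i : ℕ) - n, by have := i.isLt; omega⟩).isLt n⟩

lemma isParking_comp_perm {n : ℕ} (f : Fin n → Fin n) (γ : Equiv.Perm (Fin n))
    (hf : IsParking f) : IsParking (f ∘ γ) := by
  obtain ⟨g, σ, hmono, hle, heq⟩ := hf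
  exact ⟨g, γ.trans σ, hmono, hle, by ext i; simp [heq]⟩

lemma concatF_val_lt {n m : ℕ} (f : Fin n → Fin n) (g : Fin m → Fin m)
    (i : Fin (n + m)) (h : (i : ℕ) < n) :
    (concatF f g i : ℕ) = (f ⟨i, h⟩ : ℕ) := by
  simp [concatF, h]

lemma concatF_val_ge {n m : ℕ} (f : Fin n → Fin n) (g : Fin m → Fin m)
    (i : Fin (n + m)) (h : ¬ (i : ℕ) < n) :
    (concatF f g i : ℕ) = n + (g ⟨(i : ℕ) - n, by have := i.isLt; omega⟩ : ℕ) := by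
  simp [concatF, h]

set_option maxHeartbeats 1000000 in
lemma concatF_eq {n m : ℕ} (f gf : Fin n → Fin n) (σf : Equiv.Perm (Fin n))
    (g gg : Fin m → Fin m) (σg : Equiv.Perm (Fin m))
    (hf : f = gf ∘ σf) (hg : g = gg ∘ σg) :
    concatF f g = concatF gf gg ∘
      (finSumFinEquiv.symm.trans ((Equiv.sumCongr σf σg).trans finSumFinEquiv)) := by
  set e := finSumFinEquiv.symm.trans ((Equiv.sumCongr σf σg).trans finSumFinEquiv) with he
  clear_value e
  funext i
  by_cases h : (i : ℕ) < n
  · have hi : i = Fin.castAdd m ⟨i, h⟩ := by ext; simp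
    have hσ : e i = Fin.castAdd m (σf ⟨i, h⟩) := by
      rw [congrArg e hi]
      simp only [he, Equiv.trans_apply, finSumFinEquiv_symm_apply_castAdd,
        Equiv.sumCongr_apply, Sum.map_inl, finSumFinEquiv_apply_left]
    have hσv : ((e i : Fin (n + m)) : ℕ) = (σf ⟨i, h⟩ : ℕ) := by rw [hσ]; simp
    have h2 : ((e i : Fin (n + m)) : ℕ) < n := by rw [hσv]; exact (σf ⟨i, h⟩).isLt
    ext
    rw [concatF_val_lt f g i h, Function.comp_apply, concatF_val_lt gf gg (e i) h2]
    have : (⟨(e i : ℕ), h2⟩ : Fin n) = σf ⟨i, h⟩ := Fin.ext hσv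
    rw [this, hf]
    rfl
  · have hi : i = Fin.natAdd n ⟨(i : ℕ) - n, by have := i.isLt; omega⟩ := by
      ext; simp; omega
    have hσ : e i = Fin.natAdd n (σg ⟨(i : ℕ) - n, by have := i.isLt; omega⟩) := by
      rw [congrArg e hi]
      simp only [he, Equiv.trans_apply, finSumFinEquiv_symm_apply_natAdd,
        Equiv.sumCongr_apply, Sum.map_inr, finSumFinEquiv_apply_right]
    have h3 := congrArg Fin.val hσ
    simp only [Fin.natAdd, Fin.val_mk] at h3
    have h2 : ¬ ((e i : Fin (n + m)) : ℕ) < n := by omega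
    ext
    rw [concatF_val_ge f g i h, Function.comp_apply, concatF_val_ge gf gg (e i) h2]
    have harg : (⟨((e i : Fin (n + m)) : ℕ) - n, by have := (e i).isLt; omega⟩ : Fin m)
        = σg ⟨(i : ℕ) - n, by have := i.isLt; omega⟩ := by
      ext
      simp only [Fin.val_mk]
      omega
    rw [harg, hg]
    rfl

lemma isParking_concat {n m : ℕ} (f : Fin n → Fin n) (g : Fin m → Fin m)
    (hf : IsParking f) (hg : IsParking g) : IsParking (concatF f g) := by
  obtain ⟨gf, σf, hfm, hfle, hfeq⟩ := hf
  obtain ⟨gg, σg, hgm, hgle, hgeq⟩ := hg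
  refine ⟨concatF gf gg,
    finSumFinEquiv.symm.trans ((Equiv.sumCongr σf σg).trans finSumFinEquiv),
    ?_, ?_, concatF_eq f gf σf g gg σg hfeq hgeq⟩
  · intro a b hab
    have habv : (a : ℕ) ≤ (b : ℕ) := hab
    rw [Fin.le_def]
    by_cases ha : (a : ℕ) < n <;> by_cases hb : (b : ℕ) < n
    · rw [concatF_val_lt gf gg a ha, concatF_val_lt gf gg b hb]
      exact hfm (show (⟨a, ha⟩ : Fin n) ≤ ⟨b, hb⟩ from habv)
    · rw [concatF_val_lt gf gg a ha, concatF_val_ge gf gg b hb]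
      have := (gf ⟨a, ha⟩).isLt
      omega
    · omega
    · rw [concatF_val_ge gf gg a ha, concatF_val_ge gf gg b hb]
      have : ((⟨(a : ℕ) - n, by have := a.isLt; omega⟩ : Fin m)) ≤
          ⟨(b : ℕ) - n, by have := b.isLt; omega⟩ := by
        simp only [Fin.mk_le_mk]; omega
      exact Nat.add_le_add_left (hgm this) n
  · intro i
    by_cases h : (i : ℕ) < n
    · rw [concatF_val_lt gf gg i h]
      exact hfle ⟨i, h⟩
    · rw [concatF_val_ge gf gg i h]
      have := hgle ⟨(i : ℕ) - n, by have := i.isLt; omega⟩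
      simp only [Fin.val_mk] at this
      omega

/-- The concatenation of parking functions is a parking function, and so is its
composition with any `(n,m)`-shuffle. -/
theorem parking_concat_shuffle (n m : ℕ) (f : Fin n → Fin n) (g : Fin m → Fin m)
    (hf : IsParking f) (hg : IsParking g) :
    IsParking (concatF f g) ∧
    ∀ γ : Equiv.Perm (Fin (n + m)), IsCompShuffle (n + m) [n, m] γ →
      IsParking (concatF f g ∘ γ) := by
  have h := isParking_concat f g hf hg
  exact ⟨h, fun γ _ => isParking_comp_perm _ γ h⟩
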